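/- Let b > 0 and let D₁, D₂ be probability distributions supported in [0, b] such that every point of the support of D₁ is less than or equal to every point of the support of D₂; let D be the even mixture D = (1/2)D₁ + (1/2)D₂, and let μ⁺ denote the mean of D₂. Then for every ε > 0 there exists N such that for all n ≥ N: when the chooser's values g^C_1,…,g^C_n are i.i.d. from D, the expectation over divider values g^D_1,…,g^D_n drawn i.i.d. from D of the optimal divider expected utility, E_{g^D}[ sup_{q ∈ [−1,1]^n} U(q) ], is at least (1−ε)·n·μ⁺/2. -/

import Mathlib

open BigOperators MeasureTheory

/-- The probability, over the chooser's values drawn i.i.d. from `D`, that the chooser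
strictly prefers pile 1 under the division `q`. -/
noncomputable def chooseProb (D : Measure ℝ) {n : ℕ} (q : Fin n → ℝ) : ℝ :=
  ((Measure.pi fun _ : Fin n => D) {x | 0 < ∑ i, q i * x i}).toReal

/-- The divider's expected utility from the division `q` when his values are `gD` and the
chooser's values are i.i.d. from `D`. -/
noncomputable def divUtility (D : Measure ℝ) {n : ℕ} (q gD : Fin n → ℝ) : ℝ :=
  chooseProb D q * ∑ i, ((1 - q i) / 2) * gD i
    + (1 - chooseProb D q) * ∑ i, ((1 + q i) / 2) * gD i

namespace DCAux


lemma integrable_of_bound {α : Type*} [MeasurableSpace α] (μ : Measure α) [IsFiniteMeasure μ]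
    (f : α → ℝ) (hf : AEStronglyMeasurable f μ) (B : ℝ) (hB : ∀ᵐ x ∂μ, |f x| ≤ B) :
    Integrable f μ :=
  Integrable.mono' (integrable_const B) hf (by
    filter_upwards [hB] with x hx
    simpa [Real.norm_eq_abs] using hx)

/-- Integral against the even mixture. -/
lemma integral_mixture (D₁ D₂ : Measure ℝ) [IsProbabilityMeasure D₁] [IsProbabilityMeasure D₂]
    (f : ℝ → ℝ) (h1 : Integrable f D₁) (h2 : Integrable f D₂) :
    ∫ x, f x ∂((1 / 2 : ENNReal) • D₁ + (1 / 2 : ENNReal) • D₂)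
      = (∫ x, f x ∂D₁) / 2 + (∫ x, f x ∂D₂) / 2 := by
  rw [integral_add_measure (h1.smul_measure (by norm_num)) (h2.smul_measure (by norm_num)),
    integral_smul_measure, integral_smul_measure]
  norm_num [ENNReal.toReal_div]
  ring

/-- Splitting an integral over ℝ at a point `t`. -/
lemma integral_split (μ : Measure ℝ) [IsProbabilityMeasure μ] (f : ℝ → ℝ) (t : ℝ)
    (hf : Integrable f μ) :
    ∫ x, f x ∂μ = (∫ x in Set.Iio t, f x ∂μ) + (f t) * (μ {t}).toReal
      + ∫ x in Set.Ioi t, f x ∂μ := by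
  have h1 : ∫ x in ({t} : Set ℝ), f x ∂μ = (f t) * (μ {t}).toReal := by
    rw [setIntegral_congr_fun (measurableSet_singleton t) (g := fun _ => f t)
      (by intro x hx; rw [Set.mem_singleton_iff.1 hx])]
    rw [setIntegral_const, smul_eq_mul, mul_comm]
    rfl
  have h2 : ∫ x in Set.Iic t, f x ∂μ = (∫ x in Set.Iio t, f x ∂μ) + (f t) * (μ {t}).toReal := by
    rw [← Set.Iio_union_right, setIntegral_union (by simp) (measurableSet_singleton t)
      hf.integrableOn hf.integrableOn, h1]
  rw [← h2, ← setIntegral_union (Set.Iic_disjoint_Ioi le_rfl) measurableSet_Ioi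
    hf.integrableOn hf.integrableOn, Set.Iic_union_Ioi, setIntegral_univ]

/-- Integral of a coordinate function against a product measure. -/
lemma integral_eval {E : Type*} [MeasurableSpace E] (μ : Measure E) [IsProbabilityMeasure μ]
    {ι : Type*} [Fintype ι] (f : E → ℝ) (i : ι) :
    ∫ x : ι → E, f (x i) ∂(Measure.pi fun _ => μ) = ∫ x, f x ∂μ := by
  classical
  letI : MeasureSpace E := { volume := μ }
  have hv : (Measure.pi fun _ : ι => μ) = (volume : Measure (ι → E)) := rfl
  rw [hv]
  calc ∫ x : ι → E, f (x i) = ∫ x : ι → E, ∏ j, (if j = i then f else fun _ => (1:ℝ)) (x j) := by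
        congr 1; ext x
        rw [Finset.prod_eq_single i (fun j _ hj => by simp [hj]) (by simp)]
        simp
    _ = ∏ j, ∫ x, (if j = i then f else fun _ => (1:ℝ)) x := by
        exact MeasureTheory.integral_fintype_prod_eq_prod (μ := fun _ => μ) _
    _ = ∫ x, f x := by
        rw [Finset.prod_eq_single i (fun j _ hj => by simp [hj]) (by simp)]
        simp

/-- Integral of a product of two distinct coordinate functions. -/
lemma integral_eval_mul {E : Type*} [MeasurableSpace E] (μ : Measure E) [IsProbabilityMeasure μ]
    {ι : Type*} [Fintype ι] (f g : E → ℝ) {i j : ι} (hij : i ≠ j) :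
    ∫ x : ι → E, f (x i) * g (x j) ∂(Measure.pi fun _ => μ)
      = (∫ x, f x ∂μ) * ∫ x, g x ∂μ := by
  classical
  letI : MeasureSpace E := { volume := μ }
  have hv : (Measure.pi fun _ : ι => μ) = (volume : Measure (ι → E)) := rfl
  rw [hv]
  set F : ι → E → ℝ := fun k => if k = i then f else if k = j then g else fun _ => 1 with hF
  calc ∫ x : ι → E, f (x i) * g (x j) = ∫ x : ι → E, ∏ k, F k (x k) := by
        congr 1; ext x
        rw [← Finset.prod_subset (Finset.subset_univ {i, j})
          (fun k _ hk => by
            simp only [Finset.mem_insert, Finset.mem_singleton, not_or] at hk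
            simp [hF, hk.1, hk.2])]
        rw [Finset.prod_pair hij]
        simp [hF, hij, (Ne.symm hij)]
    _ = ∏ k, ∫ x, F k x := MeasureTheory.integral_fintype_prod_eq_prod (μ := fun _ => μ) _
    _ = (∫ x, f x ∂μ) * ∫ x, g x ∂μ := by
        rw [← Finset.prod_subset (Finset.subset_univ {i, j})
          (fun k _ hk => by
            simp only [Finset.mem_insert, Finset.mem_singleton, not_or] at hk
            simp [hF, hk.1, hk.2])]
        rw [Finset.prod_pair hij]
        simp only [hF, if_pos rfl, if_neg hij, if_pos rfl, if_neg (Ne.symm hij)]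
        rfl




lemma integrable_of_bound' {α : Type*} [MeasurableSpace α] (μ : Measure α) [IsFiniteMeasure μ]
    (f : α → ℝ) (hf : AEStronglyMeasurable f μ) (B : ℝ) (hB : ∀ᵐ x ∂μ, |f x| ≤ B) :
    Integrable f μ :=
  Integrable.mono' (integrable_const B) hf (by
    filter_upwards [hB] with x hx
    simpa [Real.norm_eq_abs] using hx)

/-- Chebyshev-type bound: probability that an i.i.d. sum of negative-mean bounded
variables is positive. -/
lemma pi_prob_sum_pos_le {E : Type*} [MeasurableSpace E] (μ : Measure E) [IsProbabilityMeasure μ]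
    {ι : Type*} [Fintype ι] (Y : E → ℝ) (hY : Measurable Y) (B : ℝ) (hB0 : 0 < B)
    (hB : ∀ᵐ x ∂μ, |Y x| ≤ B) (hneg : ∫ x, Y x ∂μ < 0) :
    ((Measure.pi fun _ : ι => μ) {ω | 0 < ∑ i, Y (ω i)}).toReal
      ≤ ((Fintype.card ι) * (2*B)^2) / ((Fintype.card ι) * (-∫ x, Y x ∂μ))^2 := by
  classical
  set π := (Measure.pi fun _ : ι => μ) with hπ
  haveI : IsProbabilityMeasure π := Measure.pi.instIsProbabilityMeasure _
  rcases Nat.eq_zero_or_pos (Fintype.card ι) with hn | hn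
  · haveI : IsEmpty ι := Fintype.card_eq_zero_iff.1 hn
    have : {ω : ι → E | 0 < ∑ i, Y (ω i)} = ∅ := by
      ext ω; simp
    rw [this]
    simp
  set m := ∫ x, Y x ∂μ with hm
  set n : ℝ := (Fintype.card ι : ℝ) with hn'
  have hnpos : (0:ℝ) < n := by rw [hn']; exact_mod_cast hn
  have hmY : Integrable Y μ := integrable_of_bound' μ Y hY.aestronglyMeasurable B hB
  have hmB : |m| ≤ B := by
    calc |m| = ‖∫ x, Y x ∂μ‖ := by rw [Real.norm_eq_abs]
    _ ≤ ∫ x, ‖Y x‖ ∂μ := norm_integral_le_integral_norm _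
    _ = ∫ x, |Y x| ∂μ := by simp [Real.norm_eq_abs]
    _ ≤ ∫ _x, B ∂μ := integral_mono_ae hmY.abs (integrable_const B) hB
    _ = B := by simp
  set Z : E → ℝ := fun x => Y x - m with hZ
  have hZmeas : Measurable Z := hY.sub measurable_const
  have hZb : ∀ᵐ x ∂μ, |Z x| ≤ 2*B := by
    filter_upwards [hB] with x hx
    have := abs_sub_abs_le_abs_sub (Y x) m
    calc |Z x| = |Y x - m| := rfl
    _ ≤ |Y x| + |m| := abs_sub (Y x) m
    _ ≤ B + B := add_le_add hx hmB
    _ = 2*B := by ring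
  have hZint : Integrable Z μ := integrable_of_bound' μ Z hZmeas.aestronglyMeasurable (2*B) hZb
  have hZzero : ∫ x, Z x ∂μ = 0 := by
    rw [hZ]
    simp only []
    rw [integral_sub hmY (integrable_const m)]
    simp [hm]
  -- a.e. coordinatewise bound on the product space
  have haeZ : ∀ᵐ ω ∂π, ∀ i, |Z (ω i)| ≤ 2*B := by
    rw [ae_all_iff]
    intro i
    have hbad : μ {x | ¬ |Z x| ≤ 2*B} = 0 := by
      have := (ae_iff).1 hZb; exact this
    have : {ω : ι → E | ¬ |Z (ω i)| ≤ 2*B} = Function.eval i ⁻¹' {x | ¬ |Z x| ≤ 2*B} := rfl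
    rw [ae_iff, this]
    exact Measure.pi_eval_preimage_null _ hbad
  set W : (ι → E) → ℝ := fun ω => ∑ i, Z (ω i) with hW
  have hWmeas : Measurable W :=
    Finset.measurable_sum _ (fun i _ => hZmeas.comp (measurable_pi_apply i))
  have hWb : ∀ᵐ ω ∂π, |W ω| ≤ n * (2*B) := by
    filter_upwards [haeZ] with ω hω
    calc |W ω| ≤ ∑ i, |Z (ω i)| := Finset.abs_sum_le_sum_abs _ _
    _ ≤ ∑ _i : ι, 2*B := Finset.sum_le_sum (fun i _ => hω i)
    _ = n * (2*B) := by rw [Finset.sum_const, nsmul_eq_mul]; rfl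
  -- second moment
  have hterm_int : ∀ i j : ι, Integrable (fun ω => Z (ω i) * Z (ω j)) π := by
    intro i j
    refine integrable_of_bound' π _ ((hZmeas.comp (measurable_pi_apply i)).mul
      (hZmeas.comp (measurable_pi_apply j))).aestronglyMeasurable ((2*B)*(2*B)) ?_
    filter_upwards [haeZ] with ω hω
    rw [abs_mul]
    exact mul_le_mul (hω i) (hω j) (abs_nonneg _) (by linarith)
  have hW2 : ∫ ω, (W ω)^2 ∂π ≤ n * (2*B)^2 := by
    have hexp : ∀ ω, (W ω)^2 = ∑ i, ∑ j, Z (ω i) * Z (ω j) := by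
      intro ω
      rw [sq, hW]
      rw [Finset.sum_mul_sum]
    calc ∫ ω, (W ω)^2 ∂π = ∑ i, ∑ j, ∫ ω, Z (ω i) * Z (ω j) ∂π := by
          simp_rw [hexp]
          rw [integral_finset_sum _ (fun i _ => integrable_finset_sum _
            (fun j _ => hterm_int i j))]
          exact Finset.sum_congr rfl (fun i _ =>
            integral_finset_sum _ (fun j _ => hterm_int i j))
    _ = ∑ i : ι, ∫ x, (Z x)^2 ∂μ := by
          refine Finset.sum_congr rfl (fun i _ => ?_)
          rw [Finset.sum_eq_single i]
          · rw [hπ]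
            simp only [← pow_two]
            exact integral_eval (ι := ι) μ (fun x => Z x ^ 2) i
          · intro j _ hji
            rw [hπ, integral_eval_mul μ Z Z (Ne.symm hji), hZzero, mul_zero]
          · intro h; exact absurd (Finset.mem_univ i) h
    _ ≤ ∑ _i : ι, (2*B)^2 := by
          refine Finset.sum_le_sum (fun i _ => ?_)
          have : ∀ᵐ x ∂μ, (Z x)^2 ≤ (2*B)^2 := by
            filter_upwards [hZb] with x hx
            calc (Z x)^2 = |Z x|^2 := by rw [sq_abs]
            _ ≤ (2*B)^2 := by
                apply pow_le_pow_left₀ (abs_nonneg _) hx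
          calc ∫ x, (Z x)^2 ∂μ ≤ ∫ _x, (2*B)^2 ∂μ := integral_mono_ae
                (integrable_of_bound' μ _ (hZmeas.pow_const 2).aestronglyMeasurable ((2*B)^2)
                  (by filter_upwards [this] with x hx;
                      rw [abs_of_nonneg (sq_nonneg _)]; exact hx))
                (integrable_const _) this
          _ = (2*B)^2 := by simp
    _ = n * (2*B)^2 := by rw [Finset.sum_const, nsmul_eq_mul]; rfl
  -- event inclusion and Chebyshev step
  set A : Set (ι → E) := {ω | 0 < ∑ i, Y (ω i)} with hA
  have hAm : MeasurableSet A :=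
    measurableSet_lt measurable_const
      (Finset.measurable_sum _ (fun i _ => hY.comp (measurable_pi_apply i)))
  set L : ℝ := n * (-m) with hL
  have hLpos : 0 < L := mul_pos hnpos (neg_pos.2 hneg)
  have hWA : ∀ ω ∈ A, L ≤ W ω := by
    intro ω hω
    have hsum : W ω = (∑ i, Y (ω i)) - n * m := by
      rw [hW]
      simp only [hZ]
      rw [Finset.sum_sub_distrib, Finset.sum_const, nsmul_eq_mul, Finset.card_univ]
    have hω' : (0:ℝ) < ∑ i, Y (ω i) := hω
    rw [hL, hsum]
    nlinarith
  have hInd : ∀ ω, A.indicator (fun _ => L^2) ω ≤ (W ω)^2 := by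
    intro ω
    by_cases hω : ω ∈ A
    · rw [Set.indicator_of_mem hω]
      have h1 := hWA ω hω
      nlinarith [sq_nonneg (W ω - L)]
    · rw [Set.indicator_of_notMem hω]
      exact sq_nonneg _
  have hW2int : Integrable (fun ω => (W ω)^2) π := by
    refine integrable_of_bound' π _ (hWmeas.pow_const 2).aestronglyMeasurable ((n*(2*B))^2) ?_
    filter_upwards [hWb] with ω hω
    rw [abs_of_nonneg (sq_nonneg _), ← sq_abs]
    exact pow_le_pow_left₀ (abs_nonneg _) hω 2
  have hIndInt : ∫ ω, A.indicator (fun _ => L^2) ω ∂π = L^2 * (π A).toReal := by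
    rw [integral_indicator_const _ hAm]
    rw [smul_eq_mul, mul_comm]
    rfl
  have hcheb : L^2 * (π A).toReal ≤ n * (2*B)^2 := by
    calc L^2 * (π A).toReal = ∫ ω, A.indicator (fun _ => L^2) ω ∂π := hIndInt.symm
    _ ≤ ∫ ω, (W ω)^2 ∂π := integral_mono_ae
        ((integrable_const (L^2)).indicator hAm) hW2int
        (Filter.Eventually.of_forall hInd)
    _ ≤ n * (2*B)^2 := hW2
  have hL2 : (0:ℝ) < L^2 := by positivity
  have hfinal : (π A).toReal ≤ (n * (2*B)^2) / L^2 := by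
    rw [le_div_iff₀ hL2]
    nlinarith [hcheb]
  rw [hL] at hfinal
  exact hfinal



variable {n : ℕ}

lemma divUtility_eq (D : Measure ℝ) (q gD : Fin n → ℝ) :
    divUtility D q gD
      = (∑ i, gD i) / 2 + (∑ i, q i * gD i) * (1/2 - chooseProb D q) := by
  unfold divUtility
  have h1 : ∑ i, ((1 - q i)/2) * gD i = (∑ i, gD i)/2 - (∑ i, q i * gD i)/2 := by
    rw [Finset.sum_div, Finset.sum_div, ← Finset.sum_sub_distrib]
    exact Finset.sum_congr rfl (fun i _ => by ring)
  have h2 : ∑ i, ((1 + q i)/2) * gD i = (∑ i, gD i)/2 + (∑ i, q i * gD i)/2 := by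
    rw [Finset.sum_div, Finset.sum_div, ← Finset.sum_add_distrib]
    exact Finset.sum_congr rfl (fun i _ => by ring)
  rw [h1, h2]
  ring

lemma chooseProb_nonneg (D : Measure ℝ) (q : Fin n → ℝ) : 0 ≤ chooseProb D q :=
  ENNReal.toReal_nonneg

lemma chooseProb_le_one (D : Measure ℝ) [IsProbabilityMeasure D] (q : Fin n → ℝ) :
    chooseProb D q ≤ 1 := by
  haveI : IsProbabilityMeasure (Measure.pi fun _ : Fin n => D) :=
    Measure.pi.instIsProbabilityMeasure _
  unfold chooseProb
  calc ((Measure.pi fun _ : Fin n => D) {x | 0 < ∑ i, q i * x i}).toReal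
      ≤ ((Measure.pi fun _ : Fin n => D) Set.univ).toReal :=
        ENNReal.toReal_mono (measure_ne_top _ _) (measure_mono (Set.subset_univ _))
  _ = 1 := by simp

/-- Monotonicity of the choosing probability when the chooser's values are a.s. nonneg. -/
lemma chooseProb_mono (D : Measure ℝ) [IsProbabilityMeasure D] (h0 : D {x : ℝ | x < 0} = 0)
    {q q' : Fin n → ℝ} (hqq : ∀ i, q i ≤ q' i) : chooseProb D q ≤ chooseProb D q' := by
  set π := Measure.pi fun _ : Fin n => D with hπ
  have hbad : π {x : Fin n → ℝ | ∃ i, x i < 0} = 0 := by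
    have h : {x : Fin n → ℝ | ∃ i, x i < 0} = ⋃ i, Function.eval i ⁻¹' {y : ℝ | y < 0} := by
      ext x; simp [Function.eval]
    rw [h]
    exact measure_iUnion_null fun i => Measure.pi_eval_preimage_null _ h0
  have hsub : {x : Fin n → ℝ | 0 < ∑ i, q i * x i}
      ⊆ {x : Fin n → ℝ | 0 < ∑ i, q' i * x i} ∪ {x : Fin n → ℝ | ∃ i, x i < 0} := by
    intro x hx
    by_cases hb : ∃ i, x i < 0
    · exact Or.inr hb
    · push_neg at hb
      refine Or.inl ?_
      calc (0:ℝ) < ∑ i, q i * x i := hx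
      _ ≤ ∑ i, q' i * x i :=
          Finset.sum_le_sum fun i _ => mul_le_mul_of_nonneg_right (hqq i) (hb i)
  have hle := (measure_mono (μ := π) hsub).trans (measure_union_le (μ := π) _ _)
  rw [hbad, add_zero] at hle
  unfold chooseProb
  haveI : IsProbabilityMeasure π := Measure.pi.instIsProbabilityMeasure _
  exact ENNReal.toReal_mono (measure_ne_top _ _) hle

/-- Crude bounds for the divider's utility. -/
lemma divUtility_le (D : Measure ℝ) [IsProbabilityMeasure D] (q gD : Fin n → ℝ)
    (hq : ∀ i, q i ∈ Set.Icc (-1:ℝ) 1) :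
    |divUtility D q gD| ≤ ∑ i, |gD i| := by
  have hP0 := chooseProb_nonneg D q
  have hP1 := chooseProb_le_one D q
  have hA : |∑ i, ((1 - q i)/2) * gD i| ≤ ∑ i, |gD i| := by
    calc |∑ i, ((1 - q i)/2) * gD i| ≤ ∑ i, |((1 - q i)/2) * gD i| :=
          Finset.abs_sum_le_sum_abs _ _
    _ ≤ ∑ i, |gD i| := by
        refine Finset.sum_le_sum fun i _ => ?_
        rw [abs_mul]
        have h1 : |(1 - q i)/2| ≤ 1 := by
          rw [abs_div]
          rw [abs_of_nonneg (by linarith [(hq i).2] : (0:ℝ) ≤ 1 - q i)]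
          have := (hq i).1
          rw [abs_of_nonneg (by norm_num : (0:ℝ) ≤ 2)]
          linarith
        nlinarith [abs_nonneg (gD i)]
  have hB : |∑ i, ((1 + q i)/2) * gD i| ≤ ∑ i, |gD i| := by
    calc |∑ i, ((1 + q i)/2) * gD i| ≤ ∑ i, |((1 + q i)/2) * gD i| :=
          Finset.abs_sum_le_sum_abs _ _
    _ ≤ ∑ i, |gD i| := by
        refine Finset.sum_le_sum fun i _ => ?_
        rw [abs_mul]
        have h1 : |(1 + q i)/2| ≤ 1 := by
          rw [abs_div]
          rw [abs_of_nonneg (by linarith [(hq i).1] : (0:ℝ) ≤ 1 + q i)]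
          rw [abs_of_nonneg (by norm_num : (0:ℝ) ≤ 2)]
          linarith [(hq i).2]
        nlinarith [abs_nonneg (gD i)]
  unfold divUtility
  set P := chooseProb D q
  set A := ∑ i, ((1 - q i)/2) * gD i
  set B := ∑ i, ((1 + q i)/2) * gD i
  rw [abs_le] at hA hB ⊢
  constructor
  · nlinarith [hA.1, hB.1]
  · nlinarith [hA.2, hB.2]

/-- Rational approximation of the supremum. -/
lemma exists_rat_approx (D : Measure ℝ) [IsProbabilityMeasure D] (h0 : D {x : ℝ | x < 0} = 0)
    (gD : Fin n → ℝ) (hgD : ∀ i, 0 ≤ gD i)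
    (q : Fin n → ℝ) (hq : ∀ i, q i ∈ Set.Icc (-1:ℝ) 1) {δ : ℝ} (hδ : 0 < δ) :
    ∃ q' : Fin n → ℚ, (∀ i, ((q' i : ℝ)) ∈ Set.Icc (-1:ℝ) 1) ∧
      divUtility D q gD - δ ≤ divUtility D (fun i => (q' i : ℝ)) gD := by
  classical
  set S := ∑ i, gD i with hS
  have hS0 : 0 ≤ S := Finset.sum_nonneg fun i _ => hgD i
  set δ₁ : ℝ := δ / (S + 1) with hδ₁
  have hδ₁pos : 0 < δ₁ := div_pos hδ (by linarith)
  have hd : δ₁ * S < δ := by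
    rw [hδ₁]
    rw [div_mul_eq_mul_div, div_lt_iff₀ (by linarith : (0:ℝ) < S + 1)]
    nlinarith
  set C := ∑ i, q i * gD i with hC
  rcases le_or_gt 0 C with hCpos | hCneg
  · -- approximate from below
    have hex : ∀ i, ∃ s : ℚ, q i - δ₁ < (s:ℝ) ∧ (s:ℝ) < q i := by
      intro i; exact exists_rat_btwn (by linarith)
    choose s hs1 hs2 using hex
    set q' : Fin n → ℚ := fun i => max (-1 : ℚ) (s i) with hq'
    have hcast : ∀ i, ((q' i : ℝ)) = max (-1:ℝ) ((s i : ℝ)) := by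
      intro i; rw [hq']; push_cast; rfl
    have hbox : ∀ i, ((q' i : ℝ)) ∈ Set.Icc (-1:ℝ) 1 := by
      intro i; rw [hcast i]
      constructor
      · exact le_max_left _ _
      · apply max_le (by norm_num)
        have := (hq i).2; linarith [hs2 i]
    have hle : ∀ i, (q' i : ℝ) ≤ q i := by
      intro i; rw [hcast i]
      exact max_le (hq i).1 (le_of_lt (hs2 i))
    have hge : ∀ i, q i - δ₁ ≤ (q' i : ℝ) := by
      intro i; rw [hcast i]
      exact le_trans (le_of_lt (hs1 i)) (le_max_right _ _)
    refine ⟨q', hbox, ?_⟩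
    set C' := ∑ i, (q' i : ℝ) * gD i with hC'
    have hC'le : C' ≤ C := Finset.sum_le_sum fun i _ =>
      mul_le_mul_of_nonneg_right (hle i) (hgD i)
    have hC'ge : C - δ₁ * S ≤ C' := by
      have : C - C' ≤ δ₁ * S := by
        rw [hC, hC', ← Finset.sum_sub_distrib, hS, Finset.mul_sum]
        refine Finset.sum_le_sum fun i _ => ?_
        rw [← sub_mul]
        exact mul_le_mul_of_nonneg_right (by linarith [hge i]) (hgD i)
      linarith
    have hP'le : chooseProb D (fun i => (q' i : ℝ)) ≤ chooseProb D q :=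
      chooseProb_mono D h0 hle
    rw [divUtility_eq, divUtility_eq, ← hS, ← hC, ← hC']
    set P := chooseProb D q
    set P' := chooseProb D (fun i => (q' i : ℝ))
    have hP0 := chooseProb_nonneg D q
    have hP1 := chooseProb_le_one D q
    have hP'0 := chooseProb_nonneg D (fun i => (q' i : ℝ))
    have hP'1 := chooseProb_le_one D (fun i => (q' i : ℝ))
    have hdS : 0 ≤ δ₁ * S := mul_nonneg (le_of_lt hδ₁pos) hS0
    have hkey : C * (1/2 - P) - δ ≤ C' * (1/2 - P') := by
      rcases le_or_gt 0 C' with hC'pos | hC'neg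
      · have h1 : C' * (1/2 - P) ≤ C' * (1/2 - P') :=
          mul_le_mul_of_nonneg_left (by linarith) hC'pos
        have h2 : (C - C') * (1/2 - P) ≤ δ₁ * S := by
          rcases le_or_gt 0 (1/2 - P) with hu | hu
          · calc (C - C') * (1/2 - P) ≤ (δ₁ * S) * (1/2 - P) :=
                mul_le_mul_of_nonneg_right (by linarith) hu
            _ ≤ (δ₁ * S) * 1 := mul_le_mul_of_nonneg_left (by linarith) hdS
            _ = δ₁ * S := mul_one _
          · have := mul_nonpos_of_nonneg_of_nonpos (by linarith : 0 ≤ C - C') (le_of_lt hu)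
            linarith
        have h3 : C * (1/2 - P) - C' * (1/2 - P) = (C - C') * (1/2 - P) := by ring
        linarith
      · have h1 : C < δ₁ * S := by linarith
        have h2 : C * (1/2 - P) ≤ δ₁ * S / 2 := by
          have hu : C * (1/2 - P) ≤ C * (1/2) :=
            mul_le_mul_of_nonneg_left (by linarith) hCpos
          linarith
        have h3 : -(δ₁ * S) ≤ C' := by linarith
        have h4 : -(δ₁ * S) / 2 ≤ C' * (1/2 - P') := by
          have hu : C' * (1/2 - P') ≥ C' * (1/2) := by
            have := mul_le_mul_of_nonpos_left (by linarith : 1/2 - P' ≤ 1/2)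
              (le_of_lt hC'neg)
            linarith [this]
          linarith
        linarith
    linarith
  · -- approximate from above
    have hex : ∀ i, ∃ s : ℚ, q i < (s:ℝ) ∧ (s:ℝ) < q i + δ₁ := by
      intro i; exact exists_rat_btwn (by linarith)
    choose s hs1 hs2 using hex
    set q' : Fin n → ℚ := fun i => min (1 : ℚ) (s i) with hq'
    have hcast : ∀ i, ((q' i : ℝ)) = min (1:ℝ) ((s i : ℝ)) := by
      intro i; rw [hq']; push_cast; rfl
    have hbox : ∀ i, ((q' i : ℝ)) ∈ Set.Icc (-1:ℝ) 1 := by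
      intro i; rw [hcast i]
      constructor
      · apply le_min (by norm_num)
        have := (hq i).1; linarith [hs1 i]
      · exact min_le_left _ _
    have hle : ∀ i, q i ≤ (q' i : ℝ) := by
      intro i; rw [hcast i]
      exact le_min (hq i).2 (le_of_lt (hs1 i))
    have hge : ∀ i, (q' i : ℝ) ≤ q i + δ₁ := by
      intro i; rw [hcast i]
      exact le_trans (min_le_right _ _) (le_of_lt (hs2 i))
    refine ⟨q', hbox, ?_⟩
    set C' := ∑ i, (q' i : ℝ) * gD i with hC'
    have hC'ge : C ≤ C' := Finset.sum_le_sum fun i _ =>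
      mul_le_mul_of_nonneg_right (hle i) (hgD i)
    have hC'le : C' ≤ C + δ₁ * S := by
      have : C' - C ≤ δ₁ * S := by
        rw [hC, hC', ← Finset.sum_sub_distrib, hS, Finset.mul_sum]
        refine Finset.sum_le_sum fun i _ => ?_
        rw [← sub_mul]
        exact mul_le_mul_of_nonneg_right (by linarith [hge i]) (hgD i)
      linarith
    have hP'ge : chooseProb D q ≤ chooseProb D (fun i => (q' i : ℝ)) :=
      chooseProb_mono D h0 hle
    rw [divUtility_eq, divUtility_eq, ← hS, ← hC, ← hC']
    set P := chooseProb D q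
    set P' := chooseProb D (fun i => (q' i : ℝ))
    have hP0 := chooseProb_nonneg D q
    have hP1 := chooseProb_le_one D q
    have hP'0 := chooseProb_nonneg D (fun i => (q' i : ℝ))
    have hP'1 := chooseProb_le_one D (fun i => (q' i : ℝ))
    have hdS : 0 ≤ δ₁ * S := mul_nonneg (le_of_lt hδ₁pos) hS0
    have hkey : C * (1/2 - P) - δ ≤ C' * (1/2 - P') := by
      rcases le_or_gt C' 0 with hC'neg | hC'pos
      · have h1 : C' * (1/2 - P) ≤ C' * (1/2 - P') :=
          mul_le_mul_of_nonpos_left (by linarith) hC'neg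
        have h2 : (C - C') * (1/2 - P) ≤ δ₁ * S := by
          rcases le_or_gt 0 (1/2 - P) with hu | hu
          · have := mul_nonpos_of_nonpos_of_nonneg (by linarith : C - C' ≤ 0) hu
            linarith
          · have ha : (C - C') * (1/2 - P) ≤ (-(δ₁ * S)) * (1/2 - P) :=
              mul_le_mul_of_nonpos_right (by linarith) (le_of_lt hu)
            have hb' : (-(δ₁ * S)) * (1/2 - P) ≤ (-(δ₁ * S)) * (-(1/2)) :=
              mul_le_mul_of_nonpos_left (by linarith) (by linarith)
            calc (C - C') * (1/2 - P) ≤ (-(δ₁ * S)) * (1/2 - P) := ha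
            _ ≤ (-(δ₁ * S)) * (-(1/2)) := hb'
            _ = δ₁ * S / 2 := by ring
            _ ≤ δ₁ * S := by linarith
        have h3 : C * (1/2 - P) - C' * (1/2 - P) = (C - C') * (1/2 - P) := by ring
        linarith
      · have h1 : -(δ₁ * S) < C := by linarith
        have h2 : C * (1/2 - P) ≤ δ₁ * S / 2 := by
          have hu : C * (1/2 - P) ≤ C * (-(1/2)) :=
            mul_le_mul_of_nonpos_left (by linarith) (le_of_lt hCneg)
          linarith
        have h4 : -(δ₁ * S) / 2 ≤ C' * (1/2 - P') := by
          have hu : C' * (-(1/2)) ≤ C' * (1/2 - P') :=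
            mul_le_mul_of_nonneg_left (by linarith) (le_of_lt hC'pos)
          have hC'small : C' < δ₁ * S := by linarith
          linarith
        linarith
    linarith



variable {n : ℕ}



/-- The countable index of rational divisions in the box. -/
def Ibox (n : ℕ) : Type := {r : Fin n → ℚ // ∀ i, ((r i : ℝ)) ∈ Set.Icc (-1:ℝ) 1}

instance : Countable (Ibox n) := by
  unfold Ibox; infer_instance

instance : Nonempty (Ibox n) := ⟨⟨fun _ => 0, fun i => by norm_num⟩⟩

lemma measurable_divUtility (D : Measure ℝ) (q : Fin n → ℝ) :
    Measurable (fun gD => divUtility D q gD) := by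
  unfold divUtility
  refine ((measurable_const.mul ?_).add (measurable_const.mul ?_)) <;>
    exact Finset.measurable_sum _ (fun i _ => measurable_const.mul (measurable_pi_apply i))

lemma bddAbove_sSupSet (D : Measure ℝ) [IsProbabilityMeasure D] (gD : Fin n → ℝ) :
    BddAbove {u : ℝ | ∃ q : Fin n → ℝ,
      (∀ i, q i ∈ Set.Icc (-1 : ℝ) 1) ∧ u = divUtility D q gD} := by
  refine ⟨∑ i, |gD i|, ?_⟩
  rintro u ⟨q, hq, rfl⟩
  exact (abs_le.1 (divUtility_le D q gD hq)).2

lemma bddAbove_range_Ibox (D : Measure ℝ) [IsProbabilityMeasure D] (gD : Fin n → ℝ) :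
    BddAbove (Set.range fun r : Ibox n => divUtility D (fun i => ((r.1 i : ℝ))) gD) := by
  refine ⟨∑ i, |gD i|, ?_⟩
  rintro u ⟨r, rfl⟩
  exact (abs_le.1 (divUtility_le D _ gD r.2)).2

lemma sSup_eq_iSup (D : Measure ℝ) [IsProbabilityMeasure D] (h0 : D {x : ℝ | x < 0} = 0)
    (gD : Fin n → ℝ) (hgD : ∀ i, 0 ≤ gD i) :
    sSup {u : ℝ | ∃ q : Fin n → ℝ,
        (∀ i, q i ∈ Set.Icc (-1 : ℝ) 1) ∧ u = divUtility D q gD}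
      = ⨆ r : Ibox n, divUtility D (fun i => ((r.1 i : ℝ))) gD := by
  have hne : {u : ℝ | ∃ q : Fin n → ℝ,
      (∀ i, q i ∈ Set.Icc (-1 : ℝ) 1) ∧ u = divUtility D q gD}.Nonempty :=
    ⟨divUtility D (fun _ => 0) gD, ⟨fun _ => 0, fun i => by norm_num, rfl⟩⟩
  apply le_antisymm
  · refine csSup_le hne ?_
    rintro u ⟨q, hq, rfl⟩
    refine le_of_forall_pos_le_add fun δ hδ => ?_
    obtain ⟨q', hbox, hle⟩ := exists_rat_approx D h0 gD hgD q hq hδ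
    have h2 : divUtility D (fun i => ((q' i : ℝ))) gD
        ≤ ⨆ r : Ibox n, divUtility D (fun i => ((r.1 i : ℝ))) gD :=
      le_ciSup (bddAbove_range_Ibox D gD) (⟨q', hbox⟩ : Ibox n)
    linarith
  · refine ciSup_le fun r => ?_
    exact le_csSup (bddAbove_sSupSet D gD) ⟨_, r.2, rfl⟩


lemma ae_pi_forall (D : Measure ℝ) [IsProbabilityMeasure D] {s : Set ℝ} (hs : D sᶜ = 0) (n : ℕ) :
    ∀ᵐ gD ∂(Measure.pi fun _ : Fin n => D), ∀ i, gD i ∈ s := by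
  rw [ae_all_iff]
  intro i
  rw [ae_iff]
  have h : {gD : Fin n → ℝ | ¬ gD i ∈ s} = Function.eval i ⁻¹' sᶜ := rfl
  rw [h]
  exact Measure.pi_eval_preimage_null _ hs

/-- The three-way mass split of a probability measure on ℝ. -/
lemma prob_three_split (μ : Measure ℝ) [IsProbabilityMeasure μ] (t : ℝ) :
    (μ (Set.Iio t)).toReal + (μ {t}).toReal + (μ (Set.Ioi t)).toReal = 1 := by
  have h1 : μ (Set.Iic t) = μ (Set.Iio t) + μ {t} := by
    rw [← Set.Iio_union_right]
    exact measure_union (by simp) (measurableSet_singleton t)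
  have h2 : (1 : ENNReal) = μ (Set.Iic t) + μ (Set.Ioi t) := by
    rw [← measure_univ (μ := μ), ← Set.Iic_union_Ioi (a := t)]
    exact measure_union (Set.Iic_disjoint_Ioi le_rfl) measurableSet_Ioi
  rw [h1] at h2
  have h3 := congrArg ENNReal.toReal h2
  rw [ENNReal.toReal_add (by finiteness) (measure_ne_top _ _),
    ENNReal.toReal_add (measure_ne_top _ _) (measure_ne_top _ _)] at h3
  simp at h3
  linarith


end DCAux

set_option maxHeartbeats 1000000

/-- Let `D₁, D₂` be probability distributions supported in `[0, b]` with
every point of the support of `D₁` at most every point of the support of `D₂` (witnessed by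
a separating threshold `t`), let `D` be the even mixture of `D₁` and `D₂`, and let `μ⁺` be
the mean of `D₂`.  Then for every `ε > 0` there is `N` such that for all `n ≥ N`, with all
values i.i.d. from `D`, the expected optimal divider utility is at least `(1−ε)·n·μ⁺/2`. -/
theorem divider_asymptotic_lower_bound
    (b : ℝ) (hb : 0 < b)
    (D₁ D₂ : Measure ℝ) [IsProbabilityMeasure D₁] [IsProbabilityMeasure D₂]
    (hsupp₁ : D₁ (Set.Icc (0 : ℝ) b)ᶜ = 0) (hsupp₂ : D₂ (Set.Icc (0 : ℝ) b)ᶜ = 0)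
    (t : ℝ) (hsep₁ : D₁ {x | t < x} = 0) (hsep₂ : D₂ {x | x < t} = 0)
    (D : Measure ℝ) (hD : D = (1 / 2 : ENNReal) • D₁ + (1 / 2 : ENNReal) • D₂)
    (μplus : ℝ) (hμplus : μplus = ∫ x, x ∂D₂) :
    ∀ ε : ℝ, 0 < ε → ∃ N : ℕ, ∀ n : ℕ, N ≤ n →
      (1 - ε) * n * μplus / 2 ≤
        ∫ gD : Fin n → ℝ,
          sSup {u : ℝ | ∃ q : Fin n → ℝ,
            (∀ i, q i ∈ Set.Icc (-1 : ℝ) 1) ∧ u = divUtility D q gD}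
          ∂(Measure.pi fun _ : Fin n => D) := by
  intro ε hε
  classical
  -- D is a probability measure
  haveI hDprob : IsProbabilityMeasure D := by
    constructor
    rw [hD]
    simp only [Measure.add_apply, Measure.smul_apply, smul_eq_mul, measure_univ, mul_one]
    exact ENNReal.add_halves 1
  have hDIcc : D (Set.Icc (0 : ℝ) b)ᶜ = 0 := by
    rw [hD]
    simp [Measure.add_apply, Measure.smul_apply, hsupp₁, hsupp₂]
  have h0 : D {x : ℝ | x < 0} = 0 := by
    refine measure_mono_null ?_ hDIcc
    intro x hx
    simp only [Set.mem_setOf_eq] at hx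
    simp only [Set.mem_compl_iff, Set.mem_Icc, not_and_or, not_le]
    exact Or.inl hx
  have haeD : ∀ᵐ x ∂D, x ∈ Set.Icc (0:ℝ) b := by
    rw [ae_iff]; exact hDIcc
  have haeD₁ : ∀ᵐ x ∂D₁, x ∈ Set.Icc (0:ℝ) b := by
    rw [ae_iff]; exact hsupp₁
  have haeD₂ : ∀ᵐ x ∂D₂, x ∈ Set.Icc (0:ℝ) b := by
    rw [ae_iff]; exact hsupp₂
  have habs : ∀ (μ' : Measure ℝ), (∀ᵐ x ∂μ', x ∈ Set.Icc (0:ℝ) b) →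
      ∀ᵐ x ∂μ', |(fun y => y) x| ≤ b := by
    intro μ' h
    filter_upwards [h] with x hx
    rw [abs_le]
    exact ⟨by linarith [hx.1], hx.2⟩
  have hintD : Integrable (fun x => x) D :=
    DCAux.integrable_of_bound D _ measurable_id.aestronglyMeasurable b (habs D haeD)
  have hintD₁ : Integrable (fun x => x) D₁ :=
    DCAux.integrable_of_bound D₁ _ measurable_id.aestronglyMeasurable b (habs D₁ haeD₁)
  have hintD₂ : Integrable (fun x => x) D₂ :=
    DCAux.integrable_of_bound D₂ _ measurable_id.aestronglyMeasurable b (habs D₂ haeD₂)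
  set μminus : ℝ := ∫ x, x ∂D₁ with hμminus
  have hμm0 : 0 ≤ μminus :=
    integral_nonneg_of_ae (by filter_upwards [haeD₁] with x hx using hx.1)
  have hμplus0 : 0 ≤ μplus := by
    rw [hμplus]
    exact integral_nonneg_of_ae (by filter_upwards [haeD₂] with x hx using hx.1)
  have hI₁ : ∫ x, x ∂D = μminus / 2 + μplus / 2 := by
    rw [hD, DCAux.integral_mixture D₁ D₂ _ hintD₁ hintD₂, hμplus]
  rcases le_or_gt ((1 - ε) * μplus) 0 with hcase | hcase
  · -- degenerate case : the lower bound is nonpositive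
    refine ⟨0, fun n _ => ?_⟩
    have h2 : (1 - ε) * (n:ℝ) * μplus ≤ 0 := by
      have h3 : ((1 - ε) * μplus) * (n:ℝ) ≤ 0 :=
        mul_nonpos_of_nonpos_of_nonneg hcase (Nat.cast_nonneg n)
      have h4 : (1 - ε) * (n:ℝ) * μplus = ((1 - ε) * μplus) * (n:ℝ) := by ring
      linarith
    have hL : (1 - ε) * (n:ℝ) * μplus / 2 ≤ 0 := by linarith
    refine hL.trans (integral_nonneg_of_ae ?_)
    filter_upwards [DCAux.ae_pi_forall D hDIcc n] with gD hgood
    have hgD : ∀ i, 0 ≤ gD i := fun i => (hgood i).1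
    have hmem : divUtility D (fun _ => 0) gD ∈ {u : ℝ | ∃ q : Fin n → ℝ,
        (∀ i, q i ∈ Set.Icc (-1 : ℝ) 1) ∧ u = divUtility D q gD} :=
      ⟨fun _ => 0, fun i => by norm_num, rfl⟩
    have h2 : 0 ≤ divUtility D (fun _ => 0) gD := by
      rw [DCAux.divUtility_eq]
      simp only [zero_mul, Finset.sum_const_zero, add_zero]
      exact div_nonneg (Finset.sum_nonneg fun i _ => hgD i) (by norm_num)
    exact h2.trans (le_csSup (DCAux.bddAbove_sSupSet D gD) hmem)
  -- main case
  have hμpos : 0 < μplus := by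
    rcases lt_or_eq_of_le hμplus0 with h | h
    · exact h
    · exfalso; rw [← h] at hcase; simp at hcase
  have hε1 : ε < 1 := by
    by_contra h
    push_neg at h
    have : (1 - ε) * μplus ≤ 0 := mul_nonpos_of_nonpos_of_nonneg (by linarith) hμplus0
    linarith
  -- the strategy function ψ
  set a : ℝ := (D₁ {t}).toReal with ha_def
  set β : ℝ := (D₂ {t}).toReal with hβ_def
  have ha0 : 0 ≤ a := ENNReal.toReal_nonneg
  have hβ0 : 0 ≤ β := ENNReal.toReal_nonneg
  set c₀ : ℝ := if a + β = 0 then 0 else (β * (1 - ε) - a) / (a + β) with hc₀_def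
  have hc₀key : c₀ * (a + β) = β * (1 - ε) - a := by
    by_cases h : a + β = 0
    · have ha' : a = 0 := by linarith
      have hβ' : β = 0 := by linarith
      simp [hc₀_def, h, ha', hβ']
    · rw [hc₀_def, if_neg h]
      field_simp
  have hc₀mem : c₀ ∈ Set.Icc (-1:ℝ) 1 := by
    by_cases h : a + β = 0
    · rw [hc₀_def, if_pos h]; constructor <;> norm_num
    · have hpos : 0 < a + β := lt_of_le_of_ne (by linarith) (Ne.symm h)
      rw [hc₀_def, if_neg h]
      constructor
      · rw [le_div_iff₀ hpos]
        nlinarith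
      · rw [div_le_one hpos]
        nlinarith
  set ψ : ℝ → ℝ := fun g => if g < t then (-1:ℝ) else if g = t then c₀ else 1 - ε
    with hψ_def
  have hψmem : ∀ g, ψ g ∈ Set.Icc (-1:ℝ) 1 := by
    intro g
    simp only [hψ_def]
    split_ifs
    · constructor <;> norm_num
    · exact hc₀mem
    · constructor <;> [linarith; linarith]
  have hψmeas : Measurable ψ := by
    simp only [hψ_def]
    exact Measurable.ite (measurableSet_lt measurable_id measurable_const)
      measurable_const (Measurable.ite (measurableSet_eq) measurable_const measurable_const)
  have hψabs : ∀ g, |ψ g| ≤ 1 := fun g => abs_le.2 ⟨(hψmem g).1, (hψmem g).2⟩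
  have hψt : ψ t = c₀ := by simp [hψ_def]
  have hψlt : ∀ g, g < t → ψ g = -1 := by
    intro g hg; simp [hψ_def, hg]
  have hψgt : ∀ g, t < g → ψ g = 1 - ε := by
    intro g hg
    simp only [hψ_def]
    rw [if_neg (not_lt.2 (le_of_lt hg)), if_neg (ne_of_gt hg)]
  -- integrability of ψ and ψ·x over the three measures
  have hψb : ∀ (μ' : Measure ℝ) [IsProbabilityMeasure μ'], Integrable ψ μ' := by
    intro μ' _
    exact DCAux.integrable_of_bound μ' ψ hψmeas.aestronglyMeasurable 1
      (Filter.Eventually.of_forall hψabs)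
  have hψxb : ∀ (μ' : Measure ℝ) [IsProbabilityMeasure μ'],
      (∀ᵐ x ∂μ', x ∈ Set.Icc (0:ℝ) b) → Integrable (fun x => ψ x * x) μ' := by
    intro μ' _ hae
    refine DCAux.integrable_of_bound μ' _ (hψmeas.mul measurable_id).aestronglyMeasurable b ?_
    filter_upwards [hae] with x hx
    rw [abs_mul]
    calc |ψ x| * |x| ≤ 1 * |x| := mul_le_mul_of_nonneg_right (hψabs x) (abs_nonneg x)
    _ = |x| := one_mul _
    _ ≤ b := abs_le.2 ⟨by linarith [hx.1], hx.2⟩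
  -- null sets for the separated supports
  have hIoi₁ : D₁ (Set.Ioi t) = 0 := hsep₁
  have hIio₂ : D₂ (Set.Iio t) = 0 := hsep₂
  have hIio₁r : (D₁ (Set.Iio t)).toReal = 1 - a := by
    have h := DCAux.prob_three_split D₁ t
    rw [hIoi₁] at h
    simp at h
    linarith
  have hIoi₂r : (D₂ (Set.Ioi t)).toReal = 1 - β := by
    have h := DCAux.prob_three_split D₂ t
    rw [hIio₂] at h
    simp at h
    linarith
  -- integrals of ψ
  have hsetIoi₁ : ∀ f : ℝ → ℝ, ∫ x in Set.Ioi t, f x ∂D₁ = 0 := by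
    intro f
    rw [Measure.restrict_eq_zero.2 hIoi₁]
    exact integral_zero_measure f
  have hsetIio₂ : ∀ f : ℝ → ℝ, ∫ x in Set.Iio t, f x ∂D₂ = 0 := by
    intro f
    rw [Measure.restrict_eq_zero.2 hIio₂]
    exact integral_zero_measure f
  have hψD₁ : ∫ x, ψ x ∂D₁ = -(1 - a) + c₀ * a := by
    rw [DCAux.integral_split D₁ ψ t (hψb D₁), hsetIoi₁ ψ, hψt]
    have h1 : ∫ x in Set.Iio t, ψ x ∂D₁ = -(1 - a) := by
      rw [setIntegral_congr_fun measurableSet_Iio (g := fun _ => (-1:ℝ))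
        (fun x hx => hψlt x hx)]
      rw [setIntegral_const, measureReal_def, hIio₁r]
      simp
    rw [h1]
    ring
  have hψD₂ : ∫ x, ψ x ∂D₂ = c₀ * β + (1 - ε) * (1 - β) := by
    rw [DCAux.integral_split D₂ ψ t (hψb D₂), hsetIio₂ ψ, hψt]
    have h1 : ∫ x in Set.Ioi t, ψ x ∂D₂ = (1 - ε) * (1 - β) := by
      rw [setIntegral_congr_fun measurableSet_Ioi (g := fun _ => (1 - ε : ℝ))
        (fun x hx => hψgt x hx)]
      rw [setIntegral_const, measureReal_def, hIoi₂r]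
      simp [mul_comm]
    rw [h1]
    ring
  have hψD : ∫ x, ψ x ∂D = -ε/2 := by
    rw [hD, DCAux.integral_mixture D₁ D₂ ψ (hψb D₁) (hψb D₂), hψD₁, hψD₂]
    linear_combination (1/2) * hc₀key
  -- integrals of ψ·x
  set J₁ : ℝ := ∫ x in Set.Iio t, x ∂D₁ with hJ₁_def
  set J₂ : ℝ := ∫ x in Set.Ioi t, x ∂D₂ with hJ₂_def
  have hsplit₁x : μminus = J₁ + t * a := by
    rw [hμminus, DCAux.integral_split D₁ (fun x => x) t hintD₁, hsetIoi₁ (fun x => x)]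
    ring
  have hsplit₂x : μplus = t * β + J₂ := by
    rw [hμplus, DCAux.integral_split D₂ (fun x => x) t hintD₂, hsetIio₂ (fun x => x)]
    ring
  have hψxD₁ : ∫ x, ψ x * x ∂D₁ = -J₁ + c₀ * t * a := by
    rw [DCAux.integral_split D₁ (fun x => ψ x * x) t (hψxb D₁ haeD₁),
      hsetIoi₁ (fun x => ψ x * x), hψt]
    have h1 : ∫ x in Set.Iio t, ψ x * x ∂D₁ = -J₁ := by
      rw [setIntegral_congr_fun measurableSet_Iio (g := fun x => -x)
        (fun x hx => by rw [hψlt x hx]; ring)]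
      rw [integral_neg]
    rw [h1]
    ring
  have hψxD₂ : ∫ x, ψ x * x ∂D₂ = c₀ * t * β + (1 - ε) * J₂ := by
    rw [DCAux.integral_split D₂ (fun x => ψ x * x) t (hψxb D₂ haeD₂),
      hsetIio₂ (fun x => ψ x * x), hψt]
    have h1 : ∫ x in Set.Ioi t, ψ x * x ∂D₂ = (1 - ε) * J₂ := by
      rw [setIntegral_congr_fun measurableSet_Ioi (g := fun x => (1 - ε) * x)
        (fun x hx => by rw [hψgt x hx])]
      rw [integral_const_mul]
    rw [h1]
    ring
  have hψxD : ∫ x, ψ x * x ∂D = ((1 - ε) * μplus - μminus) / 2 := by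
    rw [hD, DCAux.integral_mixture D₁ D₂ _ (hψxb D₁ haeD₁) (hψxb D₂ haeD₂), hψxD₁, hψxD₂]
    rw [hsplit₁x, hsplit₂x]
    linear_combination (t/2) * hc₀key
  -- the chooser-side random variable
  set m2 : ℝ := μminus / 2 + μplus / 2 with hm2_def
  have hm2pos : 0 < m2 := by rw [hm2_def]; linarith
  set μ₂ : Measure (ℝ × ℝ) := D.prod D with hμ₂_def
  haveI : IsProbabilityMeasure μ₂ := by rw [hμ₂_def]; infer_instance
  set Y : ℝ × ℝ → ℝ := fun p => ψ p.1 * p.2 with hY_def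
  have hYmeas : Measurable Y := (hψmeas.comp measurable_fst).mul measurable_snd
  have hYmean : ∫ p, Y p ∂μ₂ = (-ε/2) * m2 := by
    rw [hY_def, hμ₂_def]
    rw [MeasureTheory.integral_prod_mul (f := ψ) (g := fun y => y)]
    rw [hψD, hI₁, hm2_def]
  have hmean_neg : ∫ p, Y p ∂μ₂ < 0 := by
    rw [hYmean]
    exact mul_neg_of_neg_of_pos (by linarith) hm2pos
  have hYae : ∀ᵐ p ∂μ₂, |Y p| ≤ b := by
    have hnull : μ₂ {p : ℝ × ℝ | p.2 ∈ (Set.Icc (0:ℝ) b)ᶜ} = 0 := by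
      have h : {p : ℝ × ℝ | p.2 ∈ (Set.Icc (0:ℝ) b)ᶜ} = Set.univ ×ˢ (Set.Icc (0:ℝ) b)ᶜ := by
        ext p; simp
      rw [hμ₂_def, h, Measure.prod_prod, hDIcc, mul_zero]
    rw [ae_iff]
    refine measure_mono_null ?_ hnull
    intro p hp
    simp only [Set.mem_setOf_eq] at hp ⊢
    by_contra h
    simp only [Set.mem_compl_iff, not_not] at h
    apply hp
    rw [hY_def]
    simp only
    rw [abs_mul]
    calc |ψ p.1| * |p.2| ≤ 1 * |p.2| := mul_le_mul_of_nonneg_right (hψabs p.1) (abs_nonneg _)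
    _ = |p.2| := one_mul _
    _ ≤ b := abs_le.2 ⟨by linarith [h.1], h.2⟩
  -- choice of N
  set N₀ : ℝ := (64 * b^3) / (ε^3 * m2^2 * μplus) with hN₀_def
  refine ⟨⌈N₀⌉₊ + 1, fun n hn => ?_⟩
  have hn1 : 1 ≤ n := le_trans (Nat.le_add_left 1 ⌈N₀⌉₊) hn
  have hnpos : (0:ℝ) < n := by exact_mod_cast hn1
  have hnR : N₀ ≤ (n:ℝ) := by
    calc N₀ ≤ (⌈N₀⌉₊ : ℝ) := Nat.le_ceil N₀
    _ ≤ (n : ℝ) := by exact_mod_cast le_trans (Nat.le_succ _) hn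
  -- the product space
  set π : Measure (Fin n → ℝ) := Measure.pi fun _ : Fin n => D with hπ_def
  haveI : IsProbabilityMeasure π := by rw [hπ_def]; exact Measure.pi.instIsProbabilityMeasure _
  set Ebig : Set ((Fin n → ℝ) × (Fin n → ℝ)) :=
    {p | 0 < ∑ i, ψ (p.1 i) * p.2 i} with hEbig_def
  have hEbig : MeasurableSet Ebig := by
    rw [hEbig_def]
    exact measurableSet_lt measurable_const
      (Finset.measurable_sum _ fun i _ =>
        ((hψmeas.comp ((measurable_pi_apply i).comp measurable_fst)).mul
          ((measurable_pi_apply i).comp measurable_snd)))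
  set PQ : (Fin n → ℝ) → ℝ := fun gD => chooseProb D (fun i => ψ (gD i)) with hPQ_def
  have hPQ_slice : PQ = fun gD => (π (Prod.mk gD ⁻¹' Ebig)).toReal := rfl
  have hPQmeas : Measurable PQ := by
    rw [hPQ_slice]
    exact (measurable_measure_prodMk_left hEbig).ennreal_toReal
  have hPQ0 : ∀ g, 0 ≤ PQ g := fun g => DCAux.chooseProb_nonneg D _
  have hPQ1 : ∀ g, PQ g ≤ 1 := fun g => DCAux.chooseProb_le_one D _
  set J : ℝ := ((π.prod π) Ebig).toReal with hJ_def
  have hJ0 : 0 ≤ J := ENNReal.toReal_nonneg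
  have hPQint_eq : ∫ g, PQ g ∂π = J := by
    rw [hJ_def, Measure.prod_apply hEbig, hPQ_slice]
    rw [integral_toReal ((measurable_measure_prodMk_left hEbig).aemeasurable)
      (Filter.Eventually.of_forall fun g => measure_lt_top π _)]
  -- transfer to the iid pair space and Chebyshev
  have htransfer : (π.prod π) Ebig
      = (Measure.pi fun _ : Fin n => μ₂) {ω | 0 < ∑ i, Y (ω i)} := by
    have hmp := measurePreserving_arrowProdEquivProdArrow ℝ ℝ (Fin n)
      (fun _ => D) (fun _ => D)
    have hEpre : (MeasurableEquiv.arrowProdEquivProdArrow ℝ ℝ (Fin n)) ⁻¹' Ebig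
        = {ω : Fin n → ℝ × ℝ | 0 < ∑ i, Y (ω i)} := by
      ext ω
      simp [hEbig_def, hY_def, MeasurableEquiv.arrowProdEquivProdArrow,
        Equiv.arrowProdEquivProdArrow]
    rw [← hmp.measure_preimage hEbig.nullMeasurableSet, hEpre, hμ₂_def]
  have hcheb := DCAux.pi_prob_sum_pos_le (ι := Fin n) μ₂ Y hYmeas b hb hYae hmean_neg
  rw [Fintype.card_fin] at hcheb
  have hJle : J ≤ ((n:ℝ) * (2*b)^2) / ((n * (ε * m2 / 2))^2) := by
    rw [hJ_def, htransfer]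
    convert hcheb using 3
    rw [hYmean]
    ring
  have hJfinal : b * J ≤ ε * μplus / 4 := by
    have hεp : (0:ℝ) < ε := hε
    have hd1 : ((n:ℝ) * (2*b)^2) / ((n * (ε * m2 / 2))^2)
        = 16 * b^2 / ((n:ℝ) * ε^2 * m2^2) := by
      field_simp
      ring
    rw [hd1] at hJle
    have hden : (0:ℝ) < (n:ℝ) * ε^2 * m2^2 := by positivity
    have h16 : 16 * b^2 / ((n:ℝ) * ε^2 * m2^2) * b ≤ ε * μplus / 4 := by
      rw [div_mul_eq_mul_div, div_le_div_iff₀ hden (by norm_num : (0:ℝ) < 4)]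
      have hpos3 : (0:ℝ) < ε^3 * m2^2 * μplus := by positivity
      have hd2 : N₀ * (ε^3 * m2^2 * μplus) = 64 * b^3 := by
        rw [hN₀_def]
        exact div_mul_cancel₀ _ (ne_of_gt hpos3)
      have hd3 := mul_le_mul_of_nonneg_right hnR (le_of_lt hpos3)
      rw [hd2] at hd3
      have h5 : ε * μplus * ((n:ℝ) * ε^2 * m2^2) = (n:ℝ) * (ε^3 * m2^2 * μplus) := by ring
      linarith
    calc b * J ≤ b * (16 * b^2 / ((n:ℝ) * ε^2 * m2^2)) :=
          mul_le_mul_of_nonneg_left hJle (le_of_lt hb)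
    _ = 16 * b^2 / ((n:ℝ) * ε^2 * m2^2) * b := by ring
    _ ≤ ε * μplus / 4 := h16
  -- integrals over the divider's values
  have haeGood : ∀ᵐ gD ∂π, ∀ i, gD i ∈ Set.Icc (0:ℝ) b := by
    rw [hπ_def]; exact DCAux.ae_pi_forall D hDIcc n
  set S : (Fin n → ℝ) → ℝ := fun g => ∑ i, g i with hS_def
  set C : (Fin n → ℝ) → ℝ := fun g => ∑ i, ψ (g i) * g i with hC_def
  have hSmeas : Measurable S :=
    Finset.measurable_sum _ fun i _ => measurable_pi_apply i
  have hCmeas : Measurable C :=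
    Finset.measurable_sum _ fun i _ =>
      (hψmeas.comp (measurable_pi_apply i)).mul (measurable_pi_apply i)
  have habsIcc : ∀ x : ℝ, x ∈ Set.Icc (0:ℝ) b → |x| ≤ b := by
    intro x hx; exact abs_le.2 ⟨by linarith [hx.1], hx.2⟩
  have hSbound : ∀ᵐ g ∂π, |S g| ≤ (n:ℝ) * b := by
    filter_upwards [haeGood] with g hg
    rw [hS_def]
    calc |∑ i, g i| ≤ ∑ i, |g i| := Finset.abs_sum_le_sum_abs _ _
    _ ≤ ∑ _i : Fin n, b := Finset.sum_le_sum fun i _ => habsIcc _ (hg i)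
    _ = (n:ℝ) * b := by rw [Finset.sum_const, Finset.card_univ, Fintype.card_fin, nsmul_eq_mul]
  have hCbound : ∀ᵐ g ∂π, |C g| ≤ (n:ℝ) * b := by
    filter_upwards [haeGood] with g hg
    rw [hC_def]
    calc |∑ i, ψ (g i) * g i| ≤ ∑ i, |ψ (g i) * g i| := Finset.abs_sum_le_sum_abs _ _
    _ ≤ ∑ _i : Fin n, b := by
        refine Finset.sum_le_sum fun i _ => ?_
        rw [abs_mul]
        calc |ψ (g i)| * |g i| ≤ 1 * |g i| :=
              mul_le_mul_of_nonneg_right (hψabs _) (abs_nonneg _)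
        _ = |g i| := one_mul _
        _ ≤ b := habsIcc _ (hg i)
    _ = (n:ℝ) * b := by rw [Finset.sum_const, Finset.card_univ, Fintype.card_fin, nsmul_eq_mul]
  have hSint : Integrable S π :=
    DCAux.integrable_of_bound π S hSmeas.aestronglyMeasurable _ hSbound
  have hCint : Integrable C π :=
    DCAux.integrable_of_bound π C hCmeas.aestronglyMeasurable _ hCbound
  have haeCoord : ∀ i : Fin n, ∀ᵐ g ∂π, g i ∈ Set.Icc (0:ℝ) b := by
    intro i; filter_upwards [haeGood] with g hg using hg i
  have hSval : ∫ g, S g ∂π = (n:ℝ) * m2 := by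
    rw [hS_def]
    rw [integral_finset_sum _ (fun i _ => DCAux.integrable_of_bound π _
      (measurable_pi_apply i).aestronglyMeasurable b
      (by filter_upwards [haeCoord i] with g hg using habsIcc _ hg))]
    have h : ∀ i : Fin n, ∫ g : Fin n → ℝ, g i ∂π = m2 := by
      intro i
      rw [hπ_def]
      rw [DCAux.integral_eval D (fun x => x) i, hI₁, hm2_def]
    rw [Finset.sum_congr rfl fun i _ => h i]
    rw [Finset.sum_const, Finset.card_univ, Fintype.card_fin, nsmul_eq_mul]
  have hCval : ∫ g, C g ∂π = (n:ℝ) * (((1 - ε) * μplus - μminus) / 2) := by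
    have hCeq : ∫ g, C g ∂π = ∫ g, ∑ i, ψ (g i) * g i ∂π := rfl
    rw [hCeq]
    rw [integral_finset_sum (f := fun (i : Fin n) (g : Fin n → ℝ) => ψ (g i) * g i) _
      (fun i _ => DCAux.integrable_of_bound π _
      (((hψmeas.comp (measurable_pi_apply i)).mul (measurable_pi_apply i))).aestronglyMeasurable b
      (by
        filter_upwards [haeCoord i] with g hg
        rw [abs_mul]
        calc |ψ (g i)| * |g i| ≤ 1 * |g i| :=
              mul_le_mul_of_nonneg_right (hψabs _) (abs_nonneg _)
        _ = |g i| := one_mul _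
        _ ≤ b := habsIcc _ hg))]
    have h : ∀ i : Fin n, ∫ g : Fin n → ℝ, ψ (g i) * g i ∂π
        = ((1 - ε) * μplus - μminus) / 2 := by
      intro i
      rw [hπ_def]
      rw [DCAux.integral_eval D (fun x => ψ x * x) i, hψxD]
    rw [Finset.sum_congr rfl fun i _ => h i]
    rw [Finset.sum_const, Finset.card_univ, Fintype.card_fin, nsmul_eq_mul]
  -- the strategy's utility
  set SU : (Fin n → ℝ) → ℝ := fun g => S g / 2 + C g / 2 - C g * PQ g with hSU_def
  have hSU_divU : ∀ g, divUtility D (fun i => ψ (g i)) g = SU g := by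
    intro g
    rw [DCAux.divUtility_eq, hSU_def]
    have : chooseProb D (fun i => ψ (g i)) = PQ g := rfl
    rw [this]
    rw [hS_def, hC_def]
    ring
  have hCPQint : Integrable (fun g => C g * PQ g) π := by
    refine DCAux.integrable_of_bound π _ (hCmeas.mul hPQmeas).aestronglyMeasurable ((n:ℝ)*b) ?_
    filter_upwards [hCbound] with g hg
    rw [abs_mul]
    calc |C g| * |PQ g| ≤ ((n:ℝ)*b) * |PQ g| :=
          mul_le_mul_of_nonneg_right hg (abs_nonneg _)
    _ ≤ ((n:ℝ)*b) * 1 := by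
        refine mul_le_mul_of_nonneg_left ?_ (by positivity)
        rw [abs_of_nonneg (hPQ0 g)]
        exact hPQ1 g
    _ = (n:ℝ)*b := mul_one _
  have hSUint : Integrable SU π := by
    rw [hSU_def]
    exact ((hSint.div_const 2).add (hCint.div_const 2)).sub hCPQint
  have hCP_le : ∫ g, C g * PQ g ∂π ≤ ((n:ℝ) * b) * J := by
    have h1 : ∫ g, C g * PQ g ∂π ≤ ∫ g, ((n:ℝ)*b) * PQ g ∂π := by
      refine integral_mono_ae hCPQint ((DCAux.integrable_of_bound π PQ
        hPQmeas.aestronglyMeasurable 1 (Filter.Eventually.of_forall fun g => by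
          rw [abs_of_nonneg (hPQ0 g)]; exact hPQ1 g)).const_mul _) ?_
      filter_upwards [hCbound] with g hg
      exact mul_le_mul_of_nonneg_right (le_trans (le_abs_self _) hg) (hPQ0 g)
    rw [integral_const_mul, hPQint_eq] at h1
    exact h1
  have hSUval : ((n:ℝ) * m2) / 2 + ((n:ℝ) * (((1 - ε) * μplus - μminus) / 2)) / 2
      - ((n:ℝ) * b) * J ≤ ∫ g, SU g ∂π := by
    have hSUeq : ∫ g, SU g ∂π = ∫ g, (S g / 2 + C g / 2) - C g * PQ g ∂π := rfl
    rw [hSUeq]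
    rw [integral_sub (f := fun g => S g / 2 + C g / 2) (g := fun g => C g * PQ g)
      ((hSint.div_const 2).add (hCint.div_const 2)) hCPQint]
    rw [integral_add (f := fun g => S g / 2) (g := fun g => C g / 2)
      (hSint.div_const 2) (hCint.div_const 2)]
    rw [integral_div, integral_div, hSval, hCval]
    linarith [hCP_le]
  -- the supremum is a.e. equal to a countable supremum, hence integrable
  set f : (Fin n → ℝ) → ℝ := fun gD => sSup {u : ℝ | ∃ q : Fin n → ℝ,
      (∀ i, q i ∈ Set.Icc (-1 : ℝ) 1) ∧ u = divUtility D q gD} with hf_def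
  set F : (Fin n → ℝ) → ℝ := fun gD =>
    ⨆ r : DCAux.Ibox n, divUtility D (fun i => ((r.1 i : ℝ))) gD with hF_def
  have hfF : f =ᵐ[π] F := by
    filter_upwards [haeGood] with gD hg
    rw [hf_def, hF_def]
    exact DCAux.sSup_eq_iSup D h0 gD (fun i => (hg i).1)
  have hFmeas : Measurable F := by
    rw [hF_def]
    exact Measurable.iSup fun r => DCAux.measurable_divUtility D _
  have habsle : ∀ gD : Fin n → ℝ, (∀ i, gD i ∈ Set.Icc (0:ℝ) b) →
      ∑ i, |gD i| ≤ (n:ℝ) * b := by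
    intro gD hg
    calc ∑ i, |gD i| ≤ ∑ _i : Fin n, b := Finset.sum_le_sum fun i _ => habsIcc _ (hg i)
    _ = (n:ℝ) * b := by rw [Finset.sum_const, Finset.card_univ, Fintype.card_fin, nsmul_eq_mul]
  have hFint : Integrable F π := by
    refine DCAux.integrable_of_bound π F hFmeas.aestronglyMeasurable ((n:ℝ)*b) ?_
    filter_upwards [haeGood] with gD hg
    rw [hF_def]
    rw [abs_le]
    constructor
    · have h1 : divUtility D (fun i => (((Classical.arbitrary (DCAux.Ibox n)).1 i : ℝ))) gD
          ≤ ⨆ r : DCAux.Ibox n, divUtility D (fun i => ((r.1 i : ℝ))) gD :=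
        le_ciSup (DCAux.bddAbove_range_Ibox D gD) _
      have h2 : -((n:ℝ)*b) ≤ divUtility D
          (fun i => (((Classical.arbitrary (DCAux.Ibox n)).1 i : ℝ))) gD := by
        have := (abs_le.1 (DCAux.divUtility_le D _ gD (Classical.arbitrary (DCAux.Ibox n)).2)).1
        linarith [habsle gD hg]
      linarith
    · refine ciSup_le fun r => ?_
      have := (abs_le.1 (DCAux.divUtility_le D _ gD r.2)).2
      linarith [habsle gD hg]
  have hfint : Integrable f π := (integrable_congr hfF).2 hFint
  have hfSU : ∀ g, SU g ≤ f g := by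
    intro g
    rw [← hSU_divU g, hf_def]
    exact le_csSup (DCAux.bddAbove_sSupSet D g) ⟨fun i => ψ (g i), fun i => hψmem _, rfl⟩
  have hint_le : ∫ g, SU g ∂π ≤ ∫ g, f g ∂π :=
    integral_mono hSUint hfint hfSU
  -- final computation
  have hlast : (1 - ε) * (n:ℝ) * μplus / 2
      ≤ ((n:ℝ) * m2) / 2 + ((n:ℝ) * (((1 - ε) * μplus - μminus) / 2)) / 2 - ((n:ℝ) * b) * J := by
    have h1 : ((n:ℝ) * m2) / 2 + ((n:ℝ) * (((1 - ε) * μplus - μminus) / 2)) / 2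
        = (n:ℝ) * (2 - ε) * μplus / 4 := by
      rw [hm2_def]
      ring
    rw [h1]
    have h2 : ((n:ℝ) * b) * J ≤ (n:ℝ) * (ε * μplus / 4) := by
      calc ((n:ℝ) * b) * J = (n:ℝ) * (b * J) := by ring
      _ ≤ (n:ℝ) * (ε * μplus / 4) := mul_le_mul_of_nonneg_left hJfinal (le_of_lt hnpos)
    have h3 : (n:ℝ) * (2 - ε) * μplus / 4 - (n:ℝ) * (ε * μplus / 4)
        = (1 - ε) * (n:ℝ) * μplus / 2 := by ring
    linarith
  calc (1 - ε) * (n:ℝ) * μplus / 2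
      ≤ ((n:ℝ) * m2) / 2 + ((n:ℝ) * (((1 - ε) * μplus - μminus) / 2)) / 2
        - ((n:ℝ) * b) * J := hlast
  _ ≤ ∫ g, SU g ∂π := hSUval
  _ ≤ ∫ g, f g ∂π := hint_le
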